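/- Let P be the uniform probability on a nonempty set D ⊆ {0,1}^Λ that is symmetric (closed under the global flip ω ↦ ω̄) and is a sublattice (closed under ∨, ∧; equivalently, P satisfies the FKG lattice condition). Define the equivalence relation u ∼ v iff ω_u = ω_v for all ω ∈ D, with clusters C_1,…,C_m the equivalence classes. Then D = {ω : ω is constant on each cluster C_j}. In particular |D| = 2^m. -/

import Mathlib

variable {Λ : Type*}

/-- Coordinatewise flip. -/
def flipC (ω : Λ → Bool) : Λ → Bool := fun i => !ω i

/-- `u ∼ v` iff every configuration in `D` agrees at `u` and `v`. -/
def agreeRel (D : Set (Λ → Bool)) (u v : Λ) : Prop := ∀ ω ∈ D, ω u = ω v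

/-- The cluster equivalence relation of `D`. -/
def clusterSetoid (D : Set (Λ → Bool)) : Setoid Λ :=
  ⟨agreeRel D,
    ⟨fun _ _ _ => rfl, fun h ω hω => (h ω hω).symm,
      fun h h' ω hω => (h ω hω).trans (h' ω hω)⟩⟩

private lemma finsetSupMem (D : Set (Λ → Bool)) (hbot : (⊥ : Λ → Bool) ∈ D)
    (hsup : ∀ a ∈ D, ∀ b ∈ D, a ⊔ b ∈ D) {α : Type*} [DecidableEq α]
    (s : Finset α) (f : α → Λ → Bool)
    (hf : ∀ a ∈ s, f a ∈ D) : s.sup f ∈ D := by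
  induction s using Finset.induction with
  | empty => simpa using hbot
  | insert _ _ h ih =>
    rw [Finset.sup_insert]
    exact hsup _ (hf _ (Finset.mem_insert_self _ _)) _
      (ih fun a ha => hf a (Finset.mem_insert_of_mem ha))

private lemma finsetInfMem (D : Set (Λ → Bool)) (htop : (⊤ : Λ → Bool) ∈ D)
    (hinf : ∀ a ∈ D, ∀ b ∈ D, a ⊓ b ∈ D) {α : Type*} [DecidableEq α]
    (s : Finset α) (f : α → Λ → Bool)
    (hf : ∀ a ∈ s, f a ∈ D) : s.inf f ∈ D := by
  induction s using Finset.induction with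
  | empty => simpa using htop
  | insert _ _ h ih =>
    rw [Finset.inf_insert]
    exact hinf _ (hf _ (Finset.mem_insert_self _ _)) _
      (ih fun a ha => hf a (Finset.mem_insert_of_mem ha))

/-- a nonempty symmetric sublattice `D ⊆ {0,1}^Λ` consists exactly of the
configurations constant on each cluster of the agreement relation; in particular
`|D| = 2^m` with `m` the number of clusters. -/
theorem symmetric_sublattice_eq_cluster_constant [Fintype Λ]
    (D : Set (Λ → Bool)) (hne : D.Nonempty)
    (hsym : ∀ ω ∈ D, flipC ω ∈ D)
    (hsup : ∀ ω ∈ D, ∀ ω' ∈ D, (fun i => ω i || ω' i) ∈ D)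
    (hinf : ∀ ω ∈ D, ∀ ω' ∈ D, (fun i => ω i && ω' i) ∈ D) :
    D = {ω | ∀ u v : Λ, agreeRel D u v → ω u = ω v} ∧
      Nat.card D = 2 ^ Nat.card (Quotient (clusterSetoid D)) := by
  classical
  obtain ⟨σ, hσ⟩ := hne
  have hsup' : ∀ a ∈ D, ∀ b ∈ D, a ⊔ b ∈ D := fun a ha b hb => hsup a ha b hb
  have hinf' : ∀ a ∈ D, ∀ b ∈ D, a ⊓ b ∈ D := fun a ha b hb => hinf a ha b hb
  have hbot : (⊥ : Λ → Bool) ∈ D := by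
    have := hinf σ hσ (flipC σ) (hsym σ hσ)
    have heq : (fun i => σ i && (flipC σ) i) = (⊥ : Λ → Bool) := by
      funext i; simp [flipC]
    rwa [heq] at this
  have htop : (⊤ : Λ → Bool) ∈ D := by
    have := hsup σ hσ (flipC σ) (hsym σ hσ)
    have heq : (fun i => σ i || (flipC σ) i) = (⊤ : Λ → Bool) := by
      funext i; simp [flipC]
    rwa [heq] at this
  -- separation
  have hsep : ∀ u v : Λ, ¬ agreeRel D u v → ∃ ω ∈ D, ω u = true ∧ ω v = false := by
    intro u v h
    simp only [agreeRel, not_forall] at h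
    obtain ⟨ω, hω, hne'⟩ := h
    rcases Bool.eq_false_or_eq_true (ω u) with hu | hu
    · refine ⟨ω, hω, hu, ?_⟩
      rcases Bool.eq_false_or_eq_true (ω v) with hv | hv
      · exact absurd (hu.trans hv.symm) hne'
      · exact hv
    · refine ⟨flipC ω, hsym ω hω, ?_, ?_⟩
      · simp [flipC, hu]
      · have hvt : ω v = true := by
          rcases Bool.eq_false_or_eq_true (ω v) with hv | hv
          · exact hv
          · exact absurd (hu.trans hv.symm) hne'
        simp [flipC, hvt]
  -- main membership direction
  have hmem : ∀ ψ : Λ → Bool, (∀ u v : Λ, agreeRel D u v → ψ u = ψ v) → ψ ∈ D := by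
    intro ψ hψ
    have hpair : ∀ u v : Λ, ψ u = true → ψ v = false → ¬ agreeRel D u v := by
      intro u v hu hv hag
      have := hψ u v hag
      rw [hu, hv] at this; exact Bool.noConfusion this
    set g : Λ → Λ → (Λ → Bool) := fun u v =>
      if h : ¬ agreeRel D u v then (hsep u v h).choose else ⊥ with hg
    have hgD : ∀ u v, ¬ agreeRel D u v → g u v ∈ D ∧ (g u v) u = true ∧ (g u v) v = false := by
      intro u v h
      simp only [hg, dif_pos h]
      exact ⟨(hsep u v h).choose_spec.1, (hsep u v h).choose_spec.2⟩
    set T : Finset Λ := Finset.univ.filter (fun u => ψ u = true) with hT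
    set F : Finset Λ := Finset.univ.filter (fun v => ψ v = false) with hF
    set ψ' : Λ → Bool := F.inf (fun v => T.sup (fun u => g u v)) with hψ'
    have hψ'D : ψ' ∈ D := by
      apply finsetInfMem D htop hinf'
      intro v hv
      apply finsetSupMem D hbot hsup'
      intro u hu
      have hu' : ψ u = true := (Finset.mem_filter.mp hu).2
      have hv' : ψ v = false := (Finset.mem_filter.mp hv).2
      exact (hgD u v (hpair u v hu' hv')).1
    have heq : ψ' = ψ := by
      funext i
      rcases Bool.eq_false_or_eq_true (ψ i) with hi | hi
      · -- ψ i = true : every term is true at i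
        have hiT : i ∈ T := by simp [hT, hi]
        rw [hi]
        have htopi : ψ' i = ⊤ := by
          rw [hψ', Finset.inf_apply, Finset.inf_eq_top_iff]
          intro v hv
          have hv' : ψ v = false := (Finset.mem_filter.mp hv).2
          rw [Finset.sup_apply]
          have hterm : (g i v) i = true := (hgD i v (hpair i v hi hv')).2.1
          have hle : (g i v) i ≤ T.sup (fun a => (g a v) i) :=
            Finset.le_sup (f := fun u => (g u v) i) hiT
          rw [hterm] at hle
          exact top_le_iff.mp hle
        exact htopi
      · -- ψ i = false : the term at v = i is false at i
        have hiF : i ∈ F := by simp [hF, hi]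
        have hterm : (T.sup (fun u => g u i)) i = false := by
          rw [Finset.sup_apply]
          rw [show (false : Bool) = ⊥ from rfl, Finset.sup_eq_bot_iff]
          intro u hu
          have hu' : ψ u = true := (Finset.mem_filter.mp hu).2
          exact (hgD u i (hpair u i hu' hi)).2.2
        have hle : ψ' i ≤ (T.sup (fun u => g u i)) i := by
          have h' := Finset.inf_le (f := fun v => T.sup (fun u => g u v)) hiF
          exact h' i
        rw [hterm] at hle
        rw [hi]
        exact le_bot_iff.mp hle
    rwa [heq] at hψ'D
  have hset : D = {ω | ∀ u v : Λ, agreeRel D u v → ω u = ω v} := by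
    apply Set.Subset.antisymm
    · intro ω hω u v huv
      exact huv ω hω
    · intro ψ hψ
      exact hmem ψ hψ
  refine ⟨hset, ?_⟩
  -- cardinality
  have e : D ≃ (Quotient (clusterSetoid D) → Bool) :=
    { toFun := fun ω => Quotient.lift (fun i => (ω : Λ → Bool) i)
        (fun u v h => h (ω : Λ → Bool) ω.2)
      invFun := fun f => ⟨fun i => f (Quotient.mk (clusterSetoid D) i),
        hmem _ (fun u v huv => congrArg f (Quotient.sound huv))⟩
      left_inv := fun ω => rfl
      right_inv := fun f => funext fun q => Quotient.inductionOn q fun i => rfl }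
  rw [Nat.card_congr e, Nat.card_fun]
  simp [Nat.card_eq_fintype_card]
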